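/- For any odd prime f, the general linear group GL(2, 𝔽_f) contains no subgroup isomorphic to PSL(2, d) for any prime power d ≥ 4 with PSL(2,d) simple. -/

import Mathlib

open Matrix

/-- For any odd prime `f`, `GL(2, 𝔽_f)` contains no subgroup isomorphic to `PSL(2, d)`
for a prime power `d = r ^ k ≥ 4` with `PSL(2, d)` simple. -/
theorem stmt_10 (f : ℕ) [Fact f.Prime] (hf : Odd f)
    (r k : ℕ) [Fact r.Prime] (hk : 0 < k) (hd : 4 ≤ r ^ k)
    (hsimple : IsSimpleGroup
      (Matrix.ProjectiveSpecialLinearGroup (Fin 2) (GaloisField r k))) :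
    ¬ ∃ H : Subgroup (Matrix.GeneralLinearGroup (Fin 2) (ZMod f)),
      Nonempty (H ≃* Matrix.ProjectiveSpecialLinearGroup (Fin 2) (GaloisField r k)) := by
  rintro ⟨H, ⟨e⟩⟩
  set K := GaloisField r k with hK
  -- two special elements of SL(2, K)
  set w : SpecialLinearGroup (Fin 2) K := ⟨!![0, 1; -1, 0], by simp [Matrix.det_fin_two_of]⟩
    with hw
  set u : SpecialLinearGroup (Fin 2) K := ⟨!![1, 1; 0, 1], by simp [Matrix.det_fin_two_of]⟩
    with hu
  -- their classes in PSL don't commute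
  have hwu : (QuotientGroup.mk w : ProjectiveSpecialLinearGroup (Fin 2) K) * QuotientGroup.mk u
      ≠ QuotientGroup.mk u * QuotientGroup.mk w := by
    rw [← QuotientGroup.mk_mul, ← QuotientGroup.mk_mul]
    intro h
    rw [QuotientGroup.eq] at h
    obtain ⟨c, -, hc⟩ := Matrix.SpecialLinearGroup.mem_center_iff.mp h
    have h2 : ((w * u)⁻¹ * (u * w) : SpecialLinearGroup (Fin 2) K).val = Matrix.scalar (Fin 2) c := hc.symm
    have hgrp : (w * u) * ((w * u)⁻¹ * (u * w)) = u * w := by group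
    have h3 : ((u * w) : SpecialLinearGroup (Fin 2) K).val
        = ((w * u) : SpecialLinearGroup (Fin 2) K).val * Matrix.scalar (Fin 2) c := by
      conv_lhs => rw [← hgrp]
      rw [Matrix.SpecialLinearGroup.coe_mul, h2]
    have h4 := congrFun (congrFun h3 0) 0
    rw [Matrix.SpecialLinearGroup.coe_mul, Matrix.SpecialLinearGroup.coe_mul] at h4
    simp [hw, hu, Matrix.mul_apply, Fin.sum_univ_two, Matrix.scalar_apply] at h4
  -- the class of w is an involution
  have hw2 : (QuotientGroup.mk w : ProjectiveSpecialLinearGroup (Fin 2) K) ^ 2 = 1 := by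
    rw [← QuotientGroup.mk_pow, QuotientGroup.eq_one_iff]
    refine Matrix.SpecialLinearGroup.mem_center_iff.mpr ⟨-1, by norm_num, ?_⟩
    rw [Matrix.SpecialLinearGroup.coe_pow]
    ext i j
    fin_cases i <;> fin_cases j <;>
      simp [hw, pow_two, Matrix.mul_apply, Fin.sum_univ_two, Matrix.scalar_apply,
        Matrix.one_apply]
  -- transfer to H
  set t : H := e.symm (QuotientGroup.mk w) with htdef
  set s : H := e.symm (QuotientGroup.mk u) with hsdef
  have ht2 : t ^ 2 = 1 := by
    apply e.injective
    rw [map_pow, _root_.map_one, htdef, MulEquiv.apply_symm_apply, hw2]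
  have hts : t * s ≠ s * t := by
    intro h
    apply hwu
    have := congrArg e h
    rw [_root_.map_mul, _root_.map_mul, htdef, hsdef, MulEquiv.apply_symm_apply,
      MulEquiv.apply_symm_apply] at this
    exact this
  -- H is a simple group
  have hHnt : Nontrivial H := by
    refine ⟨t * s, s * t, hts⟩
  have hHsimple : IsSimpleGroup H :=
    IsSimpleGroup.isSimpleGroup_of_surjective e.symm.toMonoidHom e.symm.surjective
  -- H is perfect, so det is trivial on H
  have h2ne : (2 : ZMod f) ≠ 0 := by
    have hf3 : 3 ≤ f := by
      rcases hf with ⟨m, hm⟩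
      have := (Fact.out : f.Prime).two_le
      omega
    intro h
    have hdvd : (f : ℕ) ∣ 2 := by
      rw [← ZMod.natCast_eq_zero_iff 2 f]
      exact_mod_cast h
    have := Nat.le_of_dvd (by norm_num) hdvd
    omega
  have hdet : ∀ x : H, Matrix.det ((x : Matrix.GeneralLinearGroup (Fin 2) (ZMod f)) :
      Matrix (Fin 2) (Fin 2) (ZMod f)) = 1 := by
    have hcomm : commutator H = ⊤ := by
      rcases (Subgroup.commutator_normal (⊤ : Subgroup H) ⊤).eq_bot_or_eq_top with h | h
      · exfalso
        apply hts
        have hle := (Subgroup.commutator_eq_bot_iff_le_centralizer).mp h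
        have := hle (Subgroup.mem_top t) s (Subgroup.mem_top s)
        exact this.symm
      · exact h
    intro x
    set φ : H →* (ZMod f)ˣ :=
      (Matrix.GeneralLinearGroup.det).comp H.subtype with hφ
    have hker : φ x = 1 := by
      have := Abelianization.commutator_subset_ker φ
      rw [hcomm] at this
      exact this (Subgroup.mem_top x)
    have := congrArg (Units.val) hker
    simpa [hφ] using this
  -- the matrix of t is scalar
  set M : Matrix (Fin 2) (Fin 2) (ZMod f) := ((t : Matrix.GeneralLinearGroup (Fin 2) (ZMod f)) :
      Matrix (Fin 2) (Fin 2) (ZMod f)) with hM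
  have hMM : M * M = 1 := by
    have : ((t ^ 2 : H) : Matrix.GeneralLinearGroup (Fin 2) (ZMod f)) = 1 := by
      rw [ht2]; rfl
    have := congrArg (fun g : Matrix.GeneralLinearGroup (Fin 2) (ZMod f) =>
      (g : Matrix (Fin 2) (Fin 2) (ZMod f))) this
    simpa [pow_two, hM] using this
  have hMdet : M.det = 1 := hdet t
  have hscalar : ∃ a : ZMod f, M = Matrix.scalar (Fin 2) a := by
    set a := M 0 0 with ha
    set b := M 0 1 with hb
    set c := M 1 0 with hc
    set d := M 1 1 with hdd
    have e00 : a * a + b * c = 1 := by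
      have := congrFun (congrFun hMM 0) 0
      simpa [Matrix.mul_apply, Fin.sum_univ_two, Matrix.one_apply, ha, hb, hc, hdd] using this
    have e01 : a * b + b * d = 0 := by
      have := congrFun (congrFun hMM 0) 1
      simpa [Matrix.mul_apply, Fin.sum_univ_two, Matrix.one_apply, ha, hb, hc, hdd] using this
    have e10 : c * a + d * c = 0 := by
      have := congrFun (congrFun hMM 1) 0
      simpa [Matrix.mul_apply, Fin.sum_univ_two, Matrix.one_apply, ha, hb, hc, hdd] using this
    have edet : a * d - b * c = 1 := by
      have := hMdet
      rwa [Matrix.det_fin_two] at this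
    have had : a + d ≠ 0 := by
      intro h
      have hda : d = -a := by linear_combination h
      apply h2ne
      linear_combination a * h - e00 - edet
    have hb0 : b = 0 := by
      have : b * (a + d) = 0 := by linear_combination e01
      rcases mul_eq_zero.mp this with h | h
      · exact h
      · exact absurd h had
    have hc0 : c = 0 := by
      have : c * (a + d) = 0 := by linear_combination e10
      rcases mul_eq_zero.mp this with h | h
      · exact h
      · exact absurd h had
    have ha2 : a * a = 1 := by linear_combination e00 - c * hb0
    have hda : d = a := by
      have h1 : a * d = 1 := by linear_combination edet + b * hc0
      have : a * d = a * a := by rw [h1, ha2]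
      have hane : a ≠ 0 := by
        intro h0
        apply one_ne_zero (α := ZMod f)
        rw [← ha2, h0, mul_zero]
      exact mul_left_cancel₀ hane this
    refine ⟨a, ?_⟩
    ext i j
    fin_cases i <;> fin_cases j <;>
      simp [Matrix.scalar_apply, Matrix.one_apply, ← ha, ← hb, ← hc, ← hdd, hb0, hc0, hda]
  -- conclude: t is central, contradicting hts
  obtain ⟨a, haM⟩ := hscalar
  set N : Matrix (Fin 2) (Fin 2) (ZMod f) := ((s : Matrix.GeneralLinearGroup (Fin 2) (ZMod f)) :
      Matrix (Fin 2) (Fin 2) (ZMod f)) with hN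
  have hcomm2 : M * N = N * M := by
    rw [haM]
    exact (Matrix.scalar_commute a (fun x => Commute.all a x) N).eq
  apply hts
  apply Subtype.ext
  apply Units.ext
  simp only [Subgroup.coe_mul, Units.val_mul, ← hM, ← hN]
  exact hcomm2
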